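/- For fixed x ∈ ℝ, the q-exponential E_q(x) := (−(1−q)x; q)_∞ = ∏_{j=0}^∞ (1 + (1−q)x q^j) converges pointwise to e^x as q ↑ 1 with q ∈ (0,1). -/

import Mathlib

set_option maxHeartbeats 1000000

open Filter

private lemma log_one_add_est {t : ℝ} (h : |t| ≤ 1/2) : |Real.log (1 + t) - t| ≤ 2 * t^2 := by
  have h1 : |(-t)| < 1 := by rw [abs_neg]; linarith
  have H := Real.abs_log_sub_add_sum_range_le h1 1
  simp only [Finset.sum_range_one, pow_one, Nat.cast_zero, zero_add, div_one, abs_neg,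
    sub_neg_eq_add] at H
  have h2 : |Real.log (1 + t) - t| = |(-t) + Real.log (1 + t)| := by
    rw [show -t + Real.log (1 + t) = Real.log (1 + t) - t by ring]
  rw [h2]
  refine H.trans ?_
  have hpow : |t| ^ (1 + 1) = t ^ 2 := by rw [← sq_abs]; norm_num
  rw [hpow, div_le_iff₀ (by linarith : (0:ℝ) < 1 - |t|)]
  have h3 := abs_nonneg t
  nlinarith [mul_nonneg (sq_nonneg t) (show (0:ℝ) ≤ 1 - 2 * |t| by linarith)]

private lemma key (x q : ℝ) (hq0 : 0 < q) (hq1 : q < 1) (h2 : |(1 - q) * x| ≤ 1/2) :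
    (∏' j : ℕ, (1 + (1 - q) * x * q ^ j))
      = Real.exp (∑' j : ℕ, Real.log (1 + (1 - q) * x * q ^ j)) ∧
    |(∑' j : ℕ, Real.log (1 + (1 - q) * x * q ^ j)) - x| ≤ 2 * (1 - q) * x ^ 2 := by
  set a : ℝ := (1 - q) * x with ha
  have hqj : ∀ j : ℕ, 0 ≤ q ^ j ∧ q ^ j ≤ 1 := fun j =>
    ⟨pow_nonneg hq0.le j, pow_le_one₀ hq0.le hq1.le⟩
  have habs : ∀ j : ℕ, |a * q ^ j| ≤ 1/2 := by
    intro j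
    rw [abs_mul, abs_of_nonneg (hqj j).1]
    calc |a| * q ^ j ≤ |a| * 1 := by
          exact mul_le_mul_of_nonneg_left (hqj j).2 (abs_nonneg _)
      _ ≤ 1/2 := by rw [mul_one]; exact h2
  have hpos : ∀ j : ℕ, 0 < 1 + a * q ^ j := by
    intro j; have := (abs_le.1 (habs j)).1; linarith
  have hest : ∀ j : ℕ, |Real.log (1 + a * q ^ j) - a * q ^ j| ≤ 2 * a^2 * q ^ j := by
    intro j
    refine (log_one_add_est (habs j)).trans ?_
    have h1 := (hqj j).1; have h2 := (hqj j).2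
    have hq2 : (q ^ j) ^ 2 ≤ q ^ j := by nlinarith
    nlinarith [mul_le_mul_of_nonneg_left hq2 (sq_nonneg a)]
  have hne : (1:ℝ) - q ≠ 0 := ne_of_gt (by linarith)
  have hgeo : HasSum (fun j : ℕ => a * q ^ j) x := by
    have h := (hasSum_geometric_of_lt_one hq0.le hq1).mul_left a
    have hx : a * (1 - q)⁻¹ = x := by
      rw [ha]; field_simp
    rwa [hx] at h
  have hgsum : Summable (fun j : ℕ => 2 * a^2 * q ^ j) :=
    (summable_geometric_of_lt_one hq0.le hq1).mul_left _
  have hfb : ∀ j : ℕ, |Real.log (1 + a * q ^ j)| ≤ (2 * a^2 + |a|) * q ^ j := by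
    intro j
    have := hest j
    have h3 : |Real.log (1 + a * q ^ j)| ≤ |Real.log (1 + a * q ^ j) - a * q ^ j| + |a * q ^ j| :=
      by simpa using abs_add_le (Real.log (1 + a * q ^ j) - a * q ^ j) (a * q ^ j)
    have h4 : |a * q ^ j| = |a| * q ^ j := by rw [abs_mul, abs_of_nonneg (hqj j).1]
    nlinarith [hest j]
  have hsumf : Summable (fun j : ℕ => Real.log (1 + a * q ^ j)) := by
    refine Summable.of_norm_bounded ((summable_geometric_of_lt_one hq0.le hq1).mul_left
      (2 * a^2 + |a|)) ?_
    intro j; simpa using hfb j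
  constructor
  · have hp := hsumf.hasSum.rexp
    have : (Real.exp ∘ fun j : ℕ => Real.log (1 + a * q ^ j))
        = fun j : ℕ => 1 + a * q ^ j := by
      funext j; exact Real.exp_log (hpos j)
    rw [this] at hp
    exact hp.tprod_eq
  · have hdiffsum : HasSum (fun j : ℕ => Real.log (1 + a * q ^ j) - a * q ^ j)
        ((∑' j : ℕ, Real.log (1 + a * q ^ j)) - x) := hsumf.hasSum.sub hgeo
    have habs_sum : Summable (fun j : ℕ => |Real.log (1 + a * q ^ j) - a * q ^ j|) :=
      Summable.of_nonneg_of_le (fun j => abs_nonneg _) hest hgsum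
    calc |(∑' j : ℕ, Real.log (1 + a * q ^ j)) - x|
        = |∑' j : ℕ, (Real.log (1 + a * q ^ j) - a * q ^ j)| := by rw [hdiffsum.tsum_eq]
      _ ≤ ∑' j : ℕ, |Real.log (1 + a * q ^ j) - a * q ^ j| := by
          have := norm_tsum_le_tsum_norm
            (f := fun j : ℕ => Real.log (1 + a * q ^ j) - a * q ^ j)
            (by simpa [Real.norm_eq_abs] using habs_sum)
          simpa [Real.norm_eq_abs] using this
      _ ≤ ∑' j : ℕ, 2 * a^2 * q ^ j := Summable.tsum_le_tsum hest habs_sum hgsum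
      _ = 2 * a^2 * (1 - q)⁻¹ := ((hasSum_geometric_of_lt_one hq0.le hq1).mul_left _).tsum_eq
      _ = 2 * (1 - q) * x ^ 2 := by
          rw [ha, mul_pow, show ((1:ℝ) - q) ^ 2 = (1 - q) * (1 - q) by ring]
          field_simp

theorem stmt10 (x : ℝ) :
    Tendsto (fun q : ℝ => ∏' j : ℕ, (1 + (1 - q) * x * q ^ j))
      (nhdsWithin 1 (Set.Ioo (0:ℝ) 1)) (nhds (Real.exp x)) := by
  set l : Filter ℝ := nhdsWithin 1 (Set.Ioo (0:ℝ) 1)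
  have hmem : ∀ᶠ q in l, q ∈ Set.Ioo (0:ℝ) 1 := eventually_mem_nhdsWithin
  have hcont : Tendsto (fun q : ℝ => |(1 - q) * x|) l (nhds 0) := by
    have : Tendsto (fun q : ℝ => |(1 - q) * x|) (nhds 1) (nhds |(1 - (1:ℝ)) * x|) := by
      exact (Continuous.abs (by continuity)).tendsto 1
    simpa using this.mono_left nhdsWithin_le_nhds
  have hsmall : ∀ᶠ q in l, |(1 - q) * x| ≤ 1/2 :=
    hcont.eventually_le_const (by norm_num)
  have hbound : Tendsto (fun q : ℝ => 2 * (1 - q) * x ^ 2) l (nhds 0) := by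
    have : Tendsto (fun q : ℝ => 2 * (1 - q) * x ^ 2) (nhds 1)
        (nhds (2 * (1 - (1:ℝ)) * x ^ 2)) := by
      exact (by continuity : Continuous fun q : ℝ => 2 * (1 - q) * x ^ 2).tendsto 1
    simpa using this.mono_left nhdsWithin_le_nhds
  have hS : Tendsto (fun q : ℝ => ∑' j : ℕ, Real.log (1 + (1 - q) * x * q ^ j)) l (nhds x) := by
    rw [tendsto_iff_dist_tendsto_zero]
    apply squeeze_zero' (Eventually.of_forall fun q => dist_nonneg)
      ((hmem.and hsmall).mono ?_) hbound
    rintro q ⟨⟨h0, h1⟩, hs⟩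
    rw [Real.dist_eq]
    exact (key x q h0 h1 hs).2
  have hexp : Tendsto (fun q : ℝ => Real.exp (∑' j : ℕ, Real.log (1 + (1 - q) * x * q ^ j)))
      l (nhds (Real.exp x)) := (Real.continuous_exp.tendsto x).comp hS
  refine Tendsto.congr' ?_ hexp
  exact (hmem.and hsmall).mono fun q ⟨⟨h0, h1⟩, hs⟩ => ((key x q h0 h1 hs).1).symm
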